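/- Fix r ≥ 1, reals α_1,…,α_r > -1, and positive reals q_1,…,q_r with q_1+···+q_r = 1. Define G_n(x) = ₍r₎F_r(α_1+⌊q_1n⌋+1,…,α_r+⌊q_rn⌋+1; α_1+1,…,α_r+1; -x). Then lim_{n→∞} G_n(z/n^r) = ₀F_r(-; α_1+1,…,α_r+1; -q_1···q_r z) uniformly on compact subsets of ℂ. -/

import Mathlib

open Filter Topology

/-- Rising factorial (Pochhammer symbol). -/
noncomputable def poch (a : ℝ) (m : ℕ) : ℝ := ∏ i ∈ Finset.range m, (a + i)

lemma poch_pos {a : ℝ} (ha : 0 < a) (m : ℕ) : 0 < poch a m :=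
  Finset.prod_pos fun i _ => by positivity

lemma floor_div_tendsto (c : ℝ) : Tendsto (fun n : ℕ => (⌊c * n⌋ : ℝ) / n) atTop (𝓝 c) := by
  have h0 : Tendsto (fun n : ℕ => (⌊c * n⌋ : ℝ) / n - c) atTop (𝓝 0) := by
    apply squeeze_zero_norm' (a := fun n : ℕ => 1 / (n : ℝ))
    · filter_upwards [eventually_ge_atTop 1] with n hn
      have hn' : (0:ℝ) < n := by exact_mod_cast hn
      have heq : (⌊c * n⌋ : ℝ) / n - c = ((⌊c * n⌋ : ℝ) - c * n) / n := by
        field_simp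
      rw [heq, norm_div, Real.norm_eq_abs, Real.norm_eq_abs, abs_of_pos hn']
      gcongr
      rw [abs_le]
      constructor
      · nlinarith [Int.lt_floor_add_one (c * (n:ℝ))]
      · nlinarith [Int.floor_le (c * (n:ℝ))]
    · exact tendsto_one_div_atTop_nhds_zero_nat
  have := h0.add (tendsto_const_nhds (x := c))
  simpa using this


set_option maxHeartbeats 2000000 in
/-- Mehler–Heine limit for multiple Laguerre polynomials of the first kind: with
`G_n(x) = ₍r₎F_r(α_1+⌊q_1n⌋+1,…,α_r+⌊q_rn⌋+1; α_1+1,…,α_r+1; -x)`,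
`G_n(z/n^r) → ₀F_r(-; α_1+1,…,α_r+1; -q_1⋯q_r z)` uniformly on compact subsets of `ℂ`. -/
theorem multiple_laguerre_first_kind_mehler_heine (r : ℕ) (hr : 1 ≤ r)
    (α : Fin r → ℝ) (hα : ∀ j, α j > -1) (q : Fin r → ℝ) (hq : ∀ j, q j > 0)
    (hq1 : ∑ j, q j = 1) :
    ∀ K : Set ℂ, IsCompact K →
      TendstoUniformlyOn
        (fun (n : ℕ) (z : ℂ) => ∑' k : ℕ,
          (∏ j, (poch (α j + (⌊q j * (n : ℝ)⌋ : ℝ) + 1) k : ℂ)) *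
            (-(z / (n : ℂ) ^ r)) ^ k /
            ((∏ j, (poch (α j + 1) k : ℂ)) * (k.factorial : ℂ)))
        (fun z : ℂ => ∑' k : ℕ,
          (-(((∏ j, q j : ℝ) : ℂ)) * z) ^ k /
            ((∏ j, (poch (α j + 1) k : ℂ)) * (k.factorial : ℂ)))
        atTop K := by
  intro K hK
  obtain ⟨R, hR0, hR⟩ := hK.isBounded.exists_pos_norm_le
  have hα1 : ∀ j, (0:ℝ) < α j + 1 := fun j => by linarith [hα j]
  -- abbreviations
  set P : ℕ → ℕ → ℝ := fun n k => ∏ j, poch (α j + (⌊q j * (n : ℝ)⌋ : ℝ) + 1) k with hP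
  set Dr : ℕ → ℝ := fun k => (∏ j, poch (α j + 1) k) * (k.factorial : ℝ) with hDr
  set a : ℕ → ℕ → ℝ := fun n k => P n k / ((n:ℝ)^(r*k) * Dr k) with ha
  set b : ℕ → ℝ := fun k => (∏ j, q j)^k / Dr k with hb
  set T : ℝ := ∏ j, (1 + (α j + 1)⁻¹) with hT
  set μ : ℝ := ∏ j, (α j + 1) with hμ
  have hDprodpos : ∀ k, (0:ℝ) < ∏ j, poch (α j + 1) k :=
    fun k => Finset.prod_pos fun j _ => poch_pos (hα1 j) k
  have hDrpos : ∀ k, 0 < Dr k := fun k =>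
    mul_pos (hDprodpos k) (by exact_mod_cast Nat.factorial_pos k)
  have hT1 : (1:ℝ) ≤ T := by
    rw [hT]
    calc (1:ℝ) = ∏ _j : Fin r, (1:ℝ) := by simp
    _ ≤ ∏ j, (1 + (α j + 1)⁻¹) := by
        apply Finset.prod_le_prod (fun _ _ => zero_le_one)
        intro j _
        have := inv_nonneg.mpr (hα1 j).le
        linarith
  have hμpos : (0:ℝ) < μ := Finset.prod_pos fun j _ => hα1 j
  have hqle1 : ∀ j, q j ≤ 1 := by
    intro j
    calc q j ≤ ∑ i, q i := Finset.single_le_sum (fun i _ => (hq i).le) (Finset.mem_univ j)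
    _ = 1 := hq1
  have hprodq0 : (0:ℝ) ≤ ∏ j, q j := Finset.prod_nonneg fun j _ => (hq j).le
  have hprodq1 : (∏ j, q j) ≤ 1 := Finset.prod_le_one (fun j _ => (hq j).le) (fun j _ => hqle1 j)
  have hfloornn : ∀ (j : Fin r) (n : ℕ), (0:ℝ) ≤ (⌊q j * (n : ℝ)⌋ : ℝ) := by
    intro j n
    have : (0:ℝ) ≤ q j * n := mul_nonneg (hq j).le (Nat.cast_nonneg n)
    exact_mod_cast Int.floor_nonneg.mpr this
  have hPpos : ∀ n k, 0 < P n k := fun n k =>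
    Finset.prod_pos fun j _ => poch_pos (by have := hfloornn j n; linarith [hα1 j]) k
  -- bound on a
  have hA : ∀ n : ℕ, 1 ≤ n → ∀ k, a n k ≤ T^k / (k.factorial : ℝ) := by
    intro n hn k
    have hn1 : (1:ℝ) ≤ (n:ℝ) := by exact_mod_cast hn
    have hn0 : (0:ℝ) < (n:ℝ) := by linarith
    have step1 : P n k ≤ (n:ℝ)^(r*k) * ∏ j, poch (α j + 2) k := by
      have hrw : (n:ℝ)^(r*k) * ∏ j, poch (α j + 2) k
          = ∏ j : Fin r, ((n:ℝ)^k * poch (α j + 2) k) := by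
        rw [Finset.prod_mul_distrib, Finset.prod_const, Finset.card_univ, Fintype.card_fin,
          ← pow_mul, mul_comm k r]
      rw [hrw, hP]
      apply Finset.prod_le_prod (fun j _ => (poch_pos (by have := hfloornn j n; linarith [hα1 j]) k).le)
      intro j _
      have hfl : (⌊q j * (n : ℝ)⌋ : ℝ) ≤ (n:ℝ) := by
        calc (⌊q j * (n : ℝ)⌋ : ℝ) ≤ q j * n := Int.floor_le _
        _ ≤ 1 * n := by nlinarith [hqle1 j]
        _ = n := one_mul _
      have hrw2 : (n:ℝ)^k * poch (α j + 2) k = ∏ i ∈ Finset.range k, ((n:ℝ) * (α j + 2 + i)) := by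
        rw [Finset.prod_mul_distrib, Finset.prod_const, Finset.card_range]; rfl
      rw [hrw2, poch]
      apply Finset.prod_le_prod
      · intro i _
        have := hfloornn j n; have := hα1 j
        have : (0:ℝ) ≤ (i:ℝ) := Nat.cast_nonneg i
        linarith [hα1 j, hfloornn j n]
      · intro i _
        have hi : (0:ℝ) ≤ (i:ℝ) := Nat.cast_nonneg i
        nlinarith [hα1 j]
    have step2 : (∏ j, poch (α j + 2) k) ≤ (∏ j, poch (α j + 1) k) * T^k := by
      have hrw : (∏ j, poch (α j + 1) k) * T^k
          = ∏ j : Fin r, (poch (α j + 1) k * (1 + (α j + 1)⁻¹)^k) := by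
        rw [Finset.prod_mul_distrib, hT, ← Finset.prod_pow]
      rw [hrw]
      apply Finset.prod_le_prod (fun j _ => (poch_pos (by linarith [hα1 j]) k).le)
      intro j _
      have hrw2 : poch (α j + 1) k * (1 + (α j + 1)⁻¹)^k
          = ∏ i ∈ Finset.range k, ((α j + 1 + i) * (1 + (α j + 1)⁻¹)) := by
        rw [Finset.prod_mul_distrib, Finset.prod_const, Finset.card_range]; rfl
      rw [hrw2, poch]
      apply Finset.prod_le_prod
      · intro i _
        have hi : (0:ℝ) ≤ (i:ℝ) := Nat.cast_nonneg i
        linarith [hα1 j]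
      · intro i _
        have hi : (0:ℝ) ≤ (i:ℝ) := Nat.cast_nonneg i
        have ht : (α j + 1) * (α j + 1)⁻¹ = 1 := mul_inv_cancel₀ (hα1 j).ne'
        have ht0 : (0:ℝ) ≤ (α j + 1)⁻¹ := inv_nonneg.mpr (hα1 j).le
        nlinarith [hα1 j]
    have key : P n k ≤ (n:ℝ)^(r*k) * ((∏ j, poch (α j + 1) k) * T^k) := by
      calc P n k ≤ (n:ℝ)^(r*k) * ∏ j, poch (α j + 2) k := step1
      _ ≤ (n:ℝ)^(r*k) * ((∏ j, poch (α j + 1) k) * T^k) := by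
          apply mul_le_mul_of_nonneg_left step2 (by positivity)
    calc a n k ≤ ((n:ℝ)^(r*k) * ((∏ j, poch (α j + 1) k) * T^k)) / ((n:ℝ)^(r*k) * Dr k) := by
          show P n k / ((n:ℝ)^(r*k) * Dr k) ≤ _
          exact (div_le_div_iff_of_pos_right (mul_pos (pow_pos hn0 _) (hDrpos k))).mpr key
    _ = T^k / (k.factorial : ℝ) := by
          rw [hDr]
          have h1 : ((n:ℝ)^(r*k)) ≠ 0 := by positivity
          have h2 : (∏ j, poch (α j + 1) k) ≠ 0 := (hDprodpos k).ne'
          have h3 : ((k.factorial : ℝ)) ≠ 0 := by positivity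
          field_simp
  -- bound on b
  have hBnn : ∀ k, 0 ≤ b k := fun k => div_nonneg (pow_nonneg hprodq0 k) (hDrpos k).le
  have hB : ∀ k, b k ≤ (μ⁻¹)^k / (k.factorial : ℝ) := by
    intro k
    have h1 : (∏ j, q j)^k ≤ 1 := pow_le_one₀ hprodq0 hprodq1
    have h2 : μ^k * (k.factorial : ℝ) ≤ Dr k := by
      rw [hDr]
      apply mul_le_mul_of_nonneg_right _ (Nat.cast_nonneg _)
      rw [hμ, ← Finset.prod_pow]
      apply Finset.prod_le_prod (fun j _ => pow_nonneg (hα1 j).le k)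
      intro j _
      show (α j + 1)^k ≤ poch (α j + 1) k
      rw [show (α j + 1)^k = ∏ _i ∈ Finset.range k, (α j + 1) from by
        rw [Finset.prod_const, Finset.card_range], poch]
      apply Finset.prod_le_prod (fun i _ => (hα1 j).le)
      intro i _
      have : (0:ℝ) ≤ (i:ℝ) := Nat.cast_nonneg i
      linarith
    have h3 : (0:ℝ) < μ^k * (k.factorial : ℝ) :=
      mul_pos (pow_pos hμpos k) (by exact_mod_cast Nat.factorial_pos k)
    calc b k ≤ 1 / (μ^k * (k.factorial : ℝ)) := by
          rw [hb]
          exact div_le_div₀ (by norm_num) h1 h3 h2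
    _ = (μ⁻¹)^k / (k.factorial : ℝ) := by
          rw [one_div, mul_inv, inv_pow, div_eq_mul_inv]
  -- pointwise limits
  have hlim : ∀ k, Tendsto (fun n => a n k) atTop (𝓝 (b k)) := by
    intro k
    have hj : ∀ j : Fin r, Tendsto (fun n : ℕ =>
        poch (α j + (⌊q j * (n : ℝ)⌋ : ℝ) + 1) k / (n:ℝ)^k) atTop (𝓝 ((q j)^k)) := by
      intro j
      have heq : ∀ n : ℕ, poch (α j + (⌊q j * (n : ℝ)⌋ : ℝ) + 1) k / (n:ℝ)^k
          = ∏ i ∈ Finset.range k, ((α j + (⌊q j * (n : ℝ)⌋ : ℝ) + 1 + i) / n) := by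
        intro n
        rw [Finset.prod_div_distrib, Finset.prod_const, Finset.card_range, poch]
      have hfac : ∀ i : ℕ, Tendsto (fun n : ℕ =>
          (α j + (⌊q j * (n : ℝ)⌋ : ℝ) + 1 + i) / n) atTop (𝓝 (q j)) := by
        intro i
        have : ∀ n : ℕ, (α j + (⌊q j * (n : ℝ)⌋ : ℝ) + 1 + i) / n
            = (α j + 1 + i) / n + (⌊q j * (n : ℝ)⌋ : ℝ) / n := by
          intro n
          rw [← add_div]
          ring_nf
        have h := (tendsto_const_div_atTop_nhds_zero_nat (α j + 1 + i)).add
          (floor_div_tendsto (q j))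
        rw [zero_add] at h
        exact h.congr (fun n => (this n).symm)
      have hprod : Tendsto (fun n : ℕ => ∏ i ∈ Finset.range k,
          ((α j + (⌊q j * (n : ℝ)⌋ : ℝ) + 1 + i) / n)) atTop (𝓝 (∏ _i ∈ Finset.range k, q j)) :=
        tendsto_finset_prod _ (fun i _ => hfac i)
      rw [Finset.prod_const, Finset.card_range] at hprod
      exact hprod.congr (fun n => (heq n).symm)
    have hprod2 : Tendsto (fun n : ℕ => ∏ j : Fin r,
        (poch (α j + (⌊q j * (n : ℝ)⌋ : ℝ) + 1) k / (n:ℝ)^k)) atTop (𝓝 (∏ j, (q j)^k)) :=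
      tendsto_finset_prod _ (fun j _ => hj j)
    rw [Finset.prod_pow] at hprod2
    have := hprod2.div_const (Dr k)
    apply this.congr
    intro n
    show (∏ j : Fin r, (poch (α j + (⌊q j * (n : ℝ)⌋ : ℝ) + 1) k / (n:ℝ)^k)) / Dr k = a n k
    rw [Finset.prod_div_distrib, Finset.prod_const, Finset.card_univ, Fintype.card_fin,
      ← pow_mul, mul_comm k r]
    show P n k / (n:ℝ)^(r*k) / Dr k = a n k
    rw [ha, div_div]
  -- dominating series
  set bound : ℕ → ℝ := fun k => (T*R)^k / (k.factorial : ℝ) + (μ⁻¹*R)^k / (k.factorial : ℝ)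
    with hbounddef
  have hbound_sum : Summable bound :=
    (Real.summable_pow_div_factorial (T*R)).add (Real.summable_pow_div_factorial (μ⁻¹*R))
  have hdiff : ∀ n : ℕ, 1 ≤ n → ∀ k, |a n k - b k| * R^k ≤ bound k := by
    intro n hn k
    have h1 : |a n k - b k| ≤ T^k / (k.factorial : ℝ) + (μ⁻¹)^k / (k.factorial : ℝ) := by
      have hann : 0 ≤ a n k := div_nonneg (hPpos n k).le
        (mul_nonneg (pow_nonneg (Nat.cast_nonneg n) _) (hDrpos k).le)
      calc |a n k - b k| ≤ |a n k| + |b k| := abs_sub _ _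
      _ = a n k + b k := by rw [abs_of_nonneg hann, abs_of_nonneg (hBnn k)]
      _ ≤ _ := add_le_add (hA n hn k) (hB k)
    calc |a n k - b k| * R^k ≤ (T^k / (k.factorial : ℝ) + (μ⁻¹)^k / (k.factorial : ℝ)) * R^k :=
          mul_le_mul_of_nonneg_right h1 (pow_nonneg hR0.le k)
    _ = bound k := by
          show _ = (T*R)^k / (k.factorial:ℝ) + (μ⁻¹*R)^k / (k.factorial:ℝ)
          rw [mul_pow, mul_pow]; ring
  -- the sup bound tends to zero
  have htend0 : Tendsto (fun n => ∑' k, |a n k - b k| * R^k) atTop (𝓝 0) := by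
    have h := tendsto_tsum_of_dominated_convergence (𝓕 := atTop)
      (f := fun (n : ℕ) (k : ℕ) => |a n k - b k| * R^k) (g := fun _ => (0:ℝ))
      (bound := bound) hbound_sum ?_ ?_
    · simpa using h
    · intro k
      have : Tendsto (fun n => a n k - b k) atTop (𝓝 0) := by
        simpa using (hlim k).sub (tendsto_const_nhds (x := b k))
      have habs : Tendsto (fun n => |a n k - b k|) atTop (𝓝 0) := by
        simpa using this.abs
      simpa using habs.mul_const (R^k)
    · filter_upwards [eventually_ge_atTop 1] with n hn k
      rw [Real.norm_eq_abs, abs_of_nonneg (mul_nonneg (abs_nonneg _) (pow_nonneg hR0.le k))]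
      exact hdiff n hn k
  -- termwise identities
  have hDc0 : ∀ k : ℕ, ((∏ j, ((poch (α j + 1) k : ℝ) : ℂ)) * (k.factorial : ℂ)) ≠ 0 := by
    intro k
    apply mul_ne_zero
    · rw [← Complex.ofReal_prod]
      exact_mod_cast (hDprodpos k).ne'
    · exact_mod_cast (Nat.factorial_pos k).ne'
  have hgterm : ∀ (z : ℂ) (k : ℕ),
      (-(((∏ j, q j : ℝ) : ℂ)) * z) ^ k /
        ((∏ j, (poch (α j + 1) k : ℂ)) * (k.factorial : ℂ)) = ((b k : ℝ) : ℂ) * (-z)^k := by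
    intro z k
    rw [hb, hDr]
    push_cast
    rw [neg_mul, ← mul_neg, mul_pow]
    field_simp
  have hfterm : ∀ (n : ℕ), 1 ≤ n → ∀ (z : ℂ) (k : ℕ),
      (∏ j, (poch (α j + (⌊q j * (n : ℝ)⌋ : ℝ) + 1) k : ℂ)) *
        (-(z / (n : ℂ) ^ r)) ^ k /
        ((∏ j, (poch (α j + 1) k : ℂ)) * (k.factorial : ℂ))
      = ((a n k : ℝ) : ℂ) * (-z)^k := by
    intro n hn z k
    have hn0 : ((n:ℂ)) ≠ 0 := by
      exact_mod_cast Nat.cast_ne_zero.mpr (by omega)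
    rw [ha, hP, hDr]
    push_cast
    rw [show (-(z / (n:ℂ)^r)) = (-z)/((n:ℂ)^r) from (neg_div _ _).symm, div_pow, ← pow_mul]
    field_simp
    simp only [mul_comm (n:ℝ) (q _)]
    ring
  -- conclusion
  rw [Metric.tendstoUniformlyOn_iff]
  intro ε hε
  filter_upwards [htend0.eventually_lt_const hε, eventually_ge_atTop 1] with n hsmall hn1
  intro z hz
  have hz' : ‖z‖ ≤ R := hR z hz
  have hfnorm : ∀ k, ‖((a n k : ℝ) : ℂ) * (-z)^k‖ ≤ (T*R)^k / (k.factorial : ℝ) := by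
    intro k
    have hann : 0 ≤ a n k := div_nonneg (hPpos n k).le
      (mul_nonneg (pow_nonneg (Nat.cast_nonneg n) _) (hDrpos k).le)
    rw [norm_mul, norm_pow, norm_neg, Complex.norm_real, Real.norm_eq_abs,
      abs_of_nonneg hann, mul_pow]
    calc a n k * ‖z‖^k ≤ (T^k / (k.factorial : ℝ)) * R^k := by
          apply mul_le_mul (hA n hn1 k) (pow_le_pow_left₀ (norm_nonneg z) hz' k)
            (pow_nonneg (norm_nonneg z) k) (by positivity)
    _ = T^k * R^k / (k.factorial : ℝ) := by ring
  have hgnorm : ∀ k, ‖((b k : ℝ) : ℂ) * (-z)^k‖ ≤ (μ⁻¹*R)^k / (k.factorial : ℝ) := by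
    intro k
    rw [norm_mul, norm_pow, norm_neg, Complex.norm_real, Real.norm_eq_abs,
      abs_of_nonneg (hBnn k), mul_pow]
    calc b k * ‖z‖^k ≤ ((μ⁻¹)^k / (k.factorial : ℝ)) * R^k := by
          apply mul_le_mul (hB k) (pow_le_pow_left₀ (norm_nonneg z) hz' k)
            (pow_nonneg (norm_nonneg z) k) (by positivity)
    _ = (μ⁻¹)^k * R^k / (k.factorial : ℝ) := by ring
  have hfsum : Summable (fun k : ℕ => ((a n k : ℝ) : ℂ) * (-z)^k) :=
    Summable.of_norm_bounded (Real.summable_pow_div_factorial (T*R)) hfnorm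
  have hgsum : Summable (fun k : ℕ => ((b k : ℝ) : ℂ) * (-z)^k) :=
    Summable.of_norm_bounded (Real.summable_pow_div_factorial (μ⁻¹*R)) hgnorm
  have hterm : ∀ k : ℕ, ‖(((b k : ℝ):ℂ) - ((a n k : ℝ):ℂ)) * (-z)^k‖ ≤ |a n k - b k| * R^k := by
    intro k
    rw [norm_mul, norm_pow, norm_neg, ← Complex.ofReal_sub, Complex.norm_real,
      Real.norm_eq_abs, abs_sub_comm]
    exact mul_le_mul_of_nonneg_left (pow_le_pow_left₀ (norm_nonneg z) hz' k) (abs_nonneg _)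
  have hSsum : Summable (fun k => |a n k - b k| * R^k) :=
    Summable.of_nonneg_of_le (fun k => mul_nonneg (abs_nonneg _) (pow_nonneg hR0.le k))
      (hdiff n hn1) hbound_sum
  have hnormsum : Summable (fun k : ℕ => ‖(((b k : ℝ):ℂ) - ((a n k : ℝ):ℂ)) * (-z)^k‖) :=
    Summable.of_nonneg_of_le (fun k => norm_nonneg _)
      (fun k => (hterm k).trans (hdiff n hn1 k)) hbound_sum
  calc dist (∑' k : ℕ, (-(((∏ j, q j : ℝ) : ℂ)) * z) ^ k /
          ((∏ j, (poch (α j + 1) k : ℂ)) * (k.factorial : ℂ)))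
        (∑' k : ℕ, (∏ j, (poch (α j + (⌊q j * (n : ℝ)⌋ : ℝ) + 1) k : ℂ)) *
          (-(z / (n : ℂ) ^ r)) ^ k / ((∏ j, (poch (α j + 1) k : ℂ)) * (k.factorial : ℂ)))
      = ‖(∑' k : ℕ, ((b k : ℝ):ℂ) * (-z)^k) - (∑' k : ℕ, ((a n k : ℝ):ℂ) * (-z)^k)‖ := by
        rw [dist_eq_norm, tsum_congr (fun k => hgterm z k),
          tsum_congr (fun k => hfterm n hn1 z k)]
  _ = ‖∑' k : ℕ, ((((b k : ℝ):ℂ) - ((a n k : ℝ):ℂ)) * (-z)^k)‖ := by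
        rw [← Summable.tsum_sub hgsum hfsum]
        congr 1
        exact tsum_congr (fun k => (sub_mul _ _ _).symm)
  _ ≤ ∑' k : ℕ, ‖(((b k : ℝ):ℂ) - ((a n k : ℝ):ℂ)) * (-z)^k‖ := norm_tsum_le_tsum_norm hnormsum
  _ ≤ ∑' k : ℕ, |a n k - b k| * R^k := Summable.tsum_le_tsum hterm hnormsum hSsum
  _ < ε := hsmall
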